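/- Let (a1, …, ak) be a telescopic sequence of positive integers with gcd(a1, …, ak) = 1 and let Λ = ⟨a1, …, ak⟩. Then for every λ ∈ Λ there exist uniquely determined natural numbers x1, …, xk with 0 ≤ x_j < d_{j−1}/d_j for all 2 ≤ j ≤ k such that λ = x1·a1 + … + xk·ak. -/

import Mathlib

/-- The numerical semigroup generated by `a 1, …, a k` (indices `1, …, k`). -/
def genSemigroup (k : ℕ) (a : ℕ → ℕ) : Set ℕ :=
  {n : ℕ | ∃ x : ℕ → ℕ, n = ∑ l ∈ Finset.Icc 1 k, x l * a l}

/-- The sequence `a 1, …, a k` is telescopic: with `d j = gcd (a 1, …, a j)`,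
for all `2 ≤ j ≤ k` the element `a j / d j` lies in the semigroup
`Λ_{j-1} = ⟨a 1 / d (j-1), …, a (j-1) / d (j-1)⟩`. -/
def IsTelescopic (k : ℕ) (a : ℕ → ℕ) : Prop :=
  ∀ j : ℕ, 2 ≤ j → j ≤ k →
    a j / Finset.gcd (Finset.Icc 1 j) a ∈
      genSemigroup (j - 1) (fun l => a l / Finset.gcd (Finset.Icc 1 (j - 1)) a)

-- helper: n / d / (e / d) = n / e when d ∣ e
lemma nat_div_div (n d e : ℕ) (h : d ∣ e) : n / d / (e / d) = n / e := by
  rw [Nat.div_div_eq_div_mul, Nat.mul_div_cancel' h]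

lemma gcd_subset_dvd {s t : Finset ℕ} {f : ℕ → ℕ} (h : s ⊆ t) :
    Finset.gcd t f ∣ Finset.gcd s f :=
  Finset.dvd_gcd fun b hb => Finset.gcd_dvd (h hb)

lemma finset_gcd_div (s : Finset ℕ) (f : ℕ → ℕ) (d : ℕ) (h : ∀ l ∈ s, d ∣ f l) :
    Finset.gcd s (fun l => f l / d) = Finset.gcd s f / d := by
  classical
  induction s using Finset.induction with
  | empty => simp
  | @insert b s hb ih =>
    rw [Finset.gcd_insert, Finset.gcd_insert, ih (fun l hl => h l (Finset.mem_insert_of_mem hl))]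
    have hdb : d ∣ f b := h b (Finset.mem_insert_self b s)
    have hds : d ∣ Finset.gcd s f := Finset.dvd_gcd fun l hl => h l (Finset.mem_insert_of_mem hl)
    exact Nat.gcd_div hdb hds

lemma genSemigroup_congr {k : ℕ} {a b : ℕ → ℕ} (h : ∀ l ∈ Finset.Icc 1 k, a l = b l) :
    genSemigroup k a = genSemigroup k b := by
  unfold genSemigroup
  ext n
  constructor <;> rintro ⟨x, rfl⟩ <;> exact ⟨x, Finset.sum_congr rfl
    (fun l hl => by rw [h l hl])⟩

lemma aux_main : ∀ (k : ℕ), 1 ≤ k → ∀ (a : ℕ → ℕ),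
    (∀ j ∈ Finset.Icc 1 k, 0 < a j) →
    Finset.gcd (Finset.Icc 1 k) a = 1 →
    IsTelescopic k a →
    ∀ lam : ℕ, lam ∈ genSemigroup k a →
    ∃! x : ℕ → ℕ,
      (∀ l : ℕ, l ∉ Finset.Icc 1 k → x l = 0) ∧
      (∀ j : ℕ, 2 ≤ j → j ≤ k →
        x j < Finset.gcd (Finset.Icc 1 (j - 1)) a / Finset.gcd (Finset.Icc 1 j) a) ∧
      lam = ∑ l ∈ Finset.Icc 1 k, x l * a l := by
  intro k
  induction k with
  | zero => omega
  | succ k IH =>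
    intro _ a hpos hgcd htel lam hlam
    rcases Nat.eq_zero_or_pos k with hk0 | hk1
    · -- base case k + 1 = 1
      subst hk0
      have h1 : a 1 = 1 := by simpa using hgcd
      obtain ⟨y, hy⟩ := hlam
      have hlam1 : lam = y 1 := by simpa [h1] using hy
      refine ⟨fun l => if l = 1 then lam else 0, ⟨?_, ?_, ?_⟩, ?_⟩
      · intro l hl
        simp only [Finset.mem_Icc] at hl
        simp only [ite_eq_right_iff]
        omega
      · intro j h2 hj; omega
      · simp [h1]
      · intro w ⟨hw0, _, hwsum⟩
        funext l
        by_cases hl : l = 1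
        · subst hl
          simp only [if_pos rfl]
          simpa [h1] using hwsum.symm
        · simp only [if_neg hl]
          exact hw0 l (by simp [Finset.mem_Icc]; omega)
    · -- inductive step, k ≥ 1
      set d := Finset.gcd (Finset.Icc 1 k) a with hd
      have hsub : Finset.Icc 1 k ⊆ Finset.Icc 1 (k+1) :=
        Finset.Icc_subset_Icc_right (by omega)
      have hd_dvd : ∀ l ∈ Finset.Icc 1 k, d ∣ a l := fun l hl => Finset.gcd_dvd hl
      have h1mem : (1 : ℕ) ∈ Finset.Icc 1 k := by simp [Finset.mem_Icc]; omega
      have hdpos : 0 < d :=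
        Nat.pos_of_dvd_of_pos (hd_dvd 1 h1mem) (hpos 1 (hsub h1mem))
      have hicc : Finset.Icc 1 (k+1) = insert (k+1) (Finset.Icc 1 k) :=
        (Finset.insert_Icc_right_eq_Icc_add_one (by omega)).symm
      have hnotmem : (k+1) ∉ Finset.Icc 1 k := by simp
      have hgcd1 : Nat.gcd (a (k+1)) d = 1 := by
        rw [hicc, Finset.gcd_insert] at hgcd
        exact hgcd
      -- telescopic at k+1 gives: d * a (k+1) ∈ ⟨a 1, …, a k⟩
      have htk := htel (k+1) (by omega) le_rfl
      simp only [Nat.add_sub_cancel, hgcd, Nat.div_one] at htk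
      obtain ⟨z, hz⟩ := htk
      have hda : d * a (k+1) = ∑ l ∈ Finset.Icc 1 k, z l * a l := by
        rw [hz, Finset.mul_sum]
        refine Finset.sum_congr rfl fun l hl => ?_
        rw [mul_comm d, mul_assoc, Nat.div_mul_cancel (hd_dvd l hl)]
      -- properties of a' = a / d
      set a' : ℕ → ℕ := fun l => a l / d with ha'
      have ha'val : ∀ l ∈ Finset.Icc 1 k, a l = d * a' l := fun l hl =>
        (Nat.mul_div_cancel' (hd_dvd l hl)).symm
      have hpos' : ∀ l ∈ Finset.Icc 1 k, 0 < a' l := fun l hl =>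
        Nat.div_pos (Nat.le_of_dvd (hpos l (hsub hl)) (hd_dvd l hl)) hdpos
      have hgcd' : Finset.gcd (Finset.Icc 1 k) a' = 1 :=
        Finset.gcd_div_eq_one h1mem (hpos 1 (hsub h1mem)).ne'
      have hgcdj : ∀ j, j ≤ k →
          Finset.gcd (Finset.Icc 1 j) a' = Finset.gcd (Finset.Icc 1 j) a / d := by
        intro j hj
        exact finset_gcd_div _ _ _ (fun l hl => hd_dvd l (Finset.Icc_subset_Icc_right hj hl))
      have hddvdgcd : ∀ j, j ≤ k → d ∣ Finset.gcd (Finset.Icc 1 j) a := fun j hj =>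
        gcd_subset_dvd (Finset.Icc_subset_Icc_right hj)
      have htel' : IsTelescopic k a' := by
        intro j h2 hjk
        rw [hgcdj j hjk, hgcdj (j-1) (by omega)]
        have e3 : a' j / (Finset.gcd (Finset.Icc 1 j) a / d)
            = a j / Finset.gcd (Finset.Icc 1 j) a :=
          nat_div_div _ _ _ (hddvdgcd j hjk)
        have e4 : (fun l => a' l / (Finset.gcd (Finset.Icc 1 (j-1)) a / d))
            = fun l => a l / Finset.gcd (Finset.Icc 1 (j-1)) a := by
          funext l; exact nat_div_div _ _ _ (hddvdgcd (j-1) (by omega))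
        rw [e3, e4]
        exact htel j h2 (by omega)
      -- the bound rewrite
      have hbnd : ∀ j, 2 ≤ j → j ≤ k →
          Finset.gcd (Finset.Icc 1 (j-1)) a' / Finset.gcd (Finset.Icc 1 j) a'
            = Finset.gcd (Finset.Icc 1 (j-1)) a / Finset.gcd (Finset.Icc 1 j) a := by
        intro j h2 hjk
        rw [hgcdj j hjk, hgcdj (j-1) (by omega)]
        exact nat_div_div _ _ _ (hddvdgcd j hjk)
      -- decompose lam
      obtain ⟨y, hy⟩ := hlam
      rw [hicc, Finset.sum_insert hnotmem] at hy
      set q := y (k+1) / d with hq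
      set r := y (k+1) % d with hr
      have hyqr : y (k+1) = d * q + r := (Nat.div_add_mod _ _).symm
      have hrlt : r < d := Nat.mod_lt _ hdpos
      set μ : ℕ := ∑ l ∈ Finset.Icc 1 k, (y l + q * z l) * a l with hμ
      have hlam' : lam = r * a (k+1) + μ := by
        rw [hy, hyqr, hμ]
        have : ∑ l ∈ Finset.Icc 1 k, (y l + q * z l) * a l
            = (∑ l ∈ Finset.Icc 1 k, y l * a l) + q * ∑ l ∈ Finset.Icc 1 k, z l * a l := by
          rw [Finset.mul_sum, ← Finset.sum_add_distrib]
          exact Finset.sum_congr rfl fun l _ => by ring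
        rw [this, ← hda]
        ring
      set ν : ℕ := ∑ l ∈ Finset.Icc 1 k, (y l + q * z l) * a' l with hν
      have hμν : μ = d * ν := by
        rw [hμ, hν, Finset.mul_sum]
        refine Finset.sum_congr rfl fun l hl => ?_
        rw [ha'val l hl]; ring
      have hνmem : ν ∈ genSemigroup k a' := ⟨fun l => y l + q * z l, hν⟩
      obtain ⟨x', ⟨hx'0, hx'b, hx'sum⟩, hx'uniq⟩ :=
        IH hk1 a' hpos' hgcd' htel' ν hνmem
      -- the representation
      refine ⟨fun l => if l = k+1 then r else x' l, ⟨?_, ?_, ?_⟩, ?_⟩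
      · intro l hl
        have hlk : l ∉ Finset.Icc 1 k := fun h => hl (hsub h)
        have : l ≠ k+1 := by
          intro h; subst h; exact hl (by simp [Finset.mem_Icc])
        simp only [if_neg this]
        exact hx'0 l hlk
      · intro j h2 hj
        rcases Nat.lt_or_ge j (k+1) with hjk | hjk
        · have hjne : j ≠ k+1 := by omega
          simp only [if_neg hjne]
          rw [← hbnd j h2 (by omega)]
          exact hx'b j h2 (by omega)
        · have hjeq : j = k+1 := by omega
          subst hjeq
          simp only [if_pos rfl, Nat.add_sub_cancel, hgcd, Nat.div_one]
          exact hrlt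
      · rw [hicc, Finset.sum_insert hnotmem]
        simp only [reduceIte]
        have e5 : ∑ l ∈ Finset.Icc 1 k, (if l = k+1 then r else x' l) * a l
            = ∑ l ∈ Finset.Icc 1 k, x' l * a l := by
          refine Finset.sum_congr rfl fun l hl => ?_
          have : l ≠ k+1 := by
            simp only [Finset.mem_Icc] at hl; omega
          rw [if_neg this]
        have hsum' : ∑ l ∈ Finset.Icc 1 k, x' l * a l = μ := by
          have e6 : ∑ l ∈ Finset.Icc 1 k, x' l * a l
              = d * ∑ l ∈ Finset.Icc 1 k, x' l * a' l := by
            rw [Finset.mul_sum]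
            exact Finset.sum_congr rfl fun l hl => by rw [ha'val l hl]; ring
          rw [e6, ← hx'sum, ← hμν]
        rw [e5, hsum']
        exact hlam'
      · -- uniqueness
        intro w ⟨hw0, hwb, hwsum⟩
        rw [hicc, Finset.sum_insert hnotmem] at hwsum
        -- first: w (k+1) = r
        have hddvdS : ∀ (u : ℕ → ℕ), d ∣ ∑ l ∈ Finset.Icc 1 k, u l * a l := fun u =>
          Finset.dvd_sum fun l hl => Dvd.dvd.mul_left (hd_dvd l hl) _
        have hwk1lt : w (k+1) < d := by
          have := hwb (k+1) (by omega) le_rfl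
          simpa [hgcd] using this
        have hmod : w (k+1) * a (k+1) ≡ r * a (k+1) [MOD d] := by
          obtain ⟨t1, ht1⟩ := hddvdS w
          have e1 : lam = w (k+1) * a (k+1) + d * t1 := by rw [hwsum, ht1]
          have e2 : lam = r * a (k+1) + d * ν := by rw [hlam', hμν]
          unfold Nat.ModEq
          have : (w (k+1) * a (k+1) + d * t1) % d = (r * a (k+1) + d * ν) % d := by
            rw [← e1, ← e2]
          simpa [Nat.add_mul_mod_self_left] using this
        have hwk1 : w (k+1) = r := by
          have hco : Nat.gcd d (a (k+1)) = 1 := Nat.Coprime.gcd_eq_one (Nat.coprime_comm.mp hgcd1)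
          have := (Nat.ModEq.cancel_right_of_coprime hco hmod)
          have h1 := this
          unfold Nat.ModEq at h1
          rwa [Nat.mod_eq_of_lt hwk1lt, Nat.mod_eq_of_lt hrlt] at h1
        -- second: the rest equals x'
        have hSeq : ∑ l ∈ Finset.Icc 1 k, w l * a l = μ := by
          rw [hwk1] at hwsum
          exact Nat.add_left_cancel (hwsum.symm.trans hlam')
        have hSν : ∑ l ∈ Finset.Icc 1 k, w l * a' l = ν := by
          have e6 : ∑ l ∈ Finset.Icc 1 k, w l * a l
              = d * ∑ l ∈ Finset.Icc 1 k, w l * a' l := by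
            rw [Finset.mul_sum]
            exact Finset.sum_congr rfl fun l hl => by rw [ha'val l hl]; ring
          rw [e6, hμν] at hSeq
          exact Nat.eq_of_mul_eq_mul_left hdpos hSeq
        set w' : ℕ → ℕ := fun l => if l = k+1 then 0 else w l with hw'
        have hw'eq : w' = x' := by
          apply hx'uniq
          refine ⟨?_, ?_, ?_⟩
          · intro l hl
            by_cases hlk : l = k+1
            · simp [hw', hlk]
            · simp only [hw', if_neg hlk]
              apply hw0
              intro hmem
              rw [hicc, Finset.mem_insert] at hmem
              rcases hmem with h | h
              · exact hlk h
              · exact hl h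
          · intro j h2 hj
            have hjne : j ≠ k+1 := by omega
            simp only [hw', if_neg hjne]
            rw [hbnd j h2 hj]
            exact hwb j h2 (by omega)
          · rw [← hSν]
            refine Finset.sum_congr rfl fun l hl => ?_
            have : l ≠ k+1 := by simp only [Finset.mem_Icc] at hl; omega
            simp [hw', if_neg this]
        funext l
        by_cases hlk : l = k+1
        · subst hlk; simp [hwk1]
        · have : w l = w' l := by simp [hw', if_neg hlk]
          rw [this, hw'eq, if_neg hlk]

/-- Lemma 2: If `(a 1, …, a k)` is a telescopic sequence of
positive integers with `gcd (a 1, …, a k) = 1` and `Λ = ⟨a 1, …, a k⟩`, then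
every `λ ∈ Λ` has a unique representation `λ = ∑ x_j · a_j` with
`0 ≤ x_j < d_{j-1} / d_j` for all `2 ≤ j ≤ k`. -/
theorem telescopic_unique_representation
    (k : ℕ) (hk : 1 ≤ k) (a : ℕ → ℕ)
    (hpos : ∀ j ∈ Finset.Icc 1 k, 0 < a j)
    (hgcd : Finset.gcd (Finset.Icc 1 k) a = 1)
    (htel : IsTelescopic k a)
    (lam : ℕ) (hlam : lam ∈ genSemigroup k a) :
    ∃! x : ℕ → ℕ,
      (∀ l : ℕ, l ∉ Finset.Icc 1 k → x l = 0) ∧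
      (∀ j : ℕ, 2 ≤ j → j ≤ k →
        x j < Finset.gcd (Finset.Icc 1 (j - 1)) a / Finset.gcd (Finset.Icc 1 j) a) ∧
      lam = ∑ l ∈ Finset.Icc 1 k, x l * a l := by
  exact aux_main k hk a hpos hgcd htel lam hlam
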